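/- Let (F_i)_{i∈ι} be a finite family of nonempty convex sets in ℝ^d. Then there exist convex sets (F'_i)_{i∈ι} in ℝ^{d+1} and two convex sets A, B in ℝ^{d+1} such that: (i) A ∩ B = ∅; (ii) for every nonempty subset S ⊆ ι, the intersection ⋂_{i∈S} F'_i is nonempty if and only if ⋂_{i∈S} F_i is nonempty; (iii) for every nonempty subset S ⊆ ι, (⋂_{i∈S} F'_i) ∩ A ≠ ∅ if and only if ⋂_{i∈S} F_i ≠ ∅, and likewise with B in place of A; (iv) each F'_i has affine dimension equal to one more than the affine dimension of F_i. (Hence if the nerve of (F_i) is the simplicial complex K, the nerve of the family (F'_i) together with A and B is the suspension S(K).) -/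

import Mathlib

open Set Module

private lemma vectorSpan_prod_eq' {V W : Type*} [AddCommGroup V] [AddCommGroup W]
    [Module ℝ V] [Module ℝ W] {s : Set V} {t : Set W} (hs : s.Nonempty) (ht : t.Nonempty) :
    vectorSpan ℝ (s ×ˢ t) = (vectorSpan ℝ s).prod (vectorSpan ℝ t) := by
  obtain ⟨a, ha⟩ := hs
  obtain ⟨b, hb⟩ := ht
  apply le_antisymm
  · rw [vectorSpan_def, Submodule.span_le]
    rintro x hx
    obtain ⟨p, hp, q, hq, rfl⟩ := hx
    exact ⟨vsub_mem_vectorSpan ℝ hp.1 hq.1, vsub_mem_vectorSpan ℝ hp.2 hq.2⟩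
  · rw [LinearMap.prod_eq_sup_map, sup_le_iff]
    constructor
    · rw [vectorSpan_def, Submodule.map_span, Submodule.span_le]
      rintro x ⟨y, hy, rfl⟩
      obtain ⟨p, hp, q, hq, rfl⟩ := hy
      have h : (LinearMap.inl ℝ V W) (p -ᵥ q) = ((p, b) : V × W) -ᵥ (q, b) := by
        simp [Prod.ext_iff]
      rw [h]
      exact vsub_mem_vectorSpan ℝ (Set.mk_mem_prod hp hb) (Set.mk_mem_prod hq hb)
    · rw [vectorSpan_def, Submodule.map_span, Submodule.span_le]
      rintro x ⟨y, hy, rfl⟩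
      obtain ⟨p, hp, q, hq, rfl⟩ := hy
      have h : (LinearMap.inr ℝ V W) (p -ᵥ q) = ((a, p) : V × W) -ᵥ (a, q) := by
        simp [Prod.ext_iff]
      rw [h]
      exact vsub_mem_vectorSpan ℝ (Set.mk_mem_prod ha hp) (Set.mk_mem_prod ha hq)

private lemma vectorSpan_Icc_top : vectorSpan ℝ (Icc (-1:ℝ) 1) = ⊤ := by
  have h2 : (2:ℝ) ∈ vectorSpan ℝ (Icc (-1:ℝ) 1) := by
    have h := vsub_mem_vectorSpan ℝ (show (1:ℝ) ∈ Icc (-1:ℝ) 1 by norm_num)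
      (show (-1:ℝ) ∈ Icc (-1:ℝ) 1 by norm_num)
    norm_num at h
    exact h
  rw [eq_top_iff]
  intro x _
  have hx : x = (x/2) • (2:ℝ) := by rw [smul_eq_mul]; ring
  rw [hx]
  exact Submodule.smul_mem _ _ h2

private lemma finrank_submodule_prod {V W : Type*} [AddCommGroup V] [AddCommGroup W]
    [Module ℝ V] [Module ℝ W] [FiniteDimensional ℝ V] [FiniteDimensional ℝ W]
    (p : Submodule ℝ V) (q : Submodule ℝ W) :
    Module.finrank ℝ (p.prod q) = Module.finrank ℝ p + Module.finrank ℝ q := by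
  have hinf : (p.map (LinearMap.inl ℝ V W)) ⊓ (q.map (LinearMap.inr ℝ V W)) = ⊥ := by
    rw [eq_bot_iff]
    rintro z ⟨⟨x, hx, rfl⟩, ⟨y, hy, hz⟩⟩
    simp only [LinearMap.coe_inl, LinearMap.coe_inr, Prod.mk.injEq] at hz
    simp [← hz.1]
  have h1 : Module.finrank ℝ (p.map (LinearMap.inl ℝ V W)) = Module.finrank ℝ p :=
    (Submodule.equivMapOfInjective _ LinearMap.inl_injective p).finrank_eq.symm
  have h2 : Module.finrank ℝ (q.map (LinearMap.inr ℝ V W)) = Module.finrank ℝ q :=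
    (Submodule.equivMapOfInjective _ LinearMap.inr_injective q).finrank_eq.symm
  have h3 := Submodule.finrank_sup_add_finrank_inf_eq
    (p.map (LinearMap.inl ℝ V W)) (q.map (LinearMap.inr ℝ V W))
  rw [hinf, finrank_bot, add_zero, h1, h2] at h3
  rw [LinearMap.prod_eq_sup_map, h3]

set_option maxHeartbeats 2000000 in
/-- **Suspension construction.** Given a finite family of nonempty convex sets in `ℝ^d`, there
exist convex sets `F'` in `ℝ^(d+1)` together with two disjoint nonempty convex sets `A` and `B`
such that the intersection pattern of the `F'` (also together with `A`, resp. `B`) reproduces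
the intersection pattern of `F`, and each `F' i` has affine dimension one more than that of
`F i`. Hence if the nerve of `F` is `K`, the nerve of the extended family is the suspension
of `K`. -/
theorem suspension_of_nerve (d : ℕ) (ι : Type*) [Fintype ι]
    (F : ι → Set (EuclideanSpace ℝ (Fin d)))
    (hne : ∀ i, (F i).Nonempty)
    (hconv : ∀ i, Convex ℝ (F i)) :
    ∃ (F' : ι → Set (EuclideanSpace ℝ (Fin (d + 1))))
      (A B : Set (EuclideanSpace ℝ (Fin (d + 1)))),
      (∀ i, Convex ℝ (F' i)) ∧ Convex ℝ A ∧ Convex ℝ B ∧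
      A.Nonempty ∧ B.Nonempty ∧
      -- (i) `A` and `B` are disjoint
      A ∩ B = ∅ ∧
      -- (ii) the `F'` have the same intersection pattern as the `F`
      (∀ S : Finset ι, S.Nonempty →
        ((⋂ i ∈ S, F' i).Nonempty ↔ (⋂ i ∈ S, F i).Nonempty)) ∧
      -- (iii) adding `A` (resp. `B`) does not change the intersection pattern
      (∀ S : Finset ι, S.Nonempty →
        (((⋂ i ∈ S, F' i) ∩ A).Nonempty ↔ (⋂ i ∈ S, F i).Nonempty)) ∧
      (∀ S : Finset ι, S.Nonempty →
        (((⋂ i ∈ S, F' i) ∩ B).Nonempty ↔ (⋂ i ∈ S, F i).Nonempty)) ∧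
      -- (iv) each `F' i` is one dimension higher than `F i`
      (∀ i, Module.finrank ℝ (affineSpan ℝ (F' i)).direction =
        Module.finrank ℝ (affineSpan ℝ (F i)).direction + 1) := by
  classical
  obtain ⟨e⟩ : Nonempty ((EuclideanSpace ℝ (Fin d) × ℝ) ≃ₗ[ℝ]
      EuclideanSpace ℝ (Fin (d + 1))) :=
    ⟨LinearEquiv.ofFinrankEq _ _ (by simp [Module.finrank_prod, finrank_euclideanSpace_fin])⟩
  refine ⟨fun i => e '' (F i ×ˢ Icc (-1:ℝ) 1),
    e '' ((univ : Set (EuclideanSpace ℝ (Fin d))) ×ˢ {(1:ℝ)}),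
    e '' ((univ : Set (EuclideanSpace ℝ (Fin d))) ×ˢ {(-1:ℝ)}),
    ?_, ?_, ?_, ?_, ?_, ?_, ?_, ?_, ?_, ?_⟩
  · exact fun i => ((hconv i).prod (convex_Icc _ _)).linear_image e.toLinearMap
  · exact (convex_univ.prod (convex_singleton _)).linear_image e.toLinearMap
  · exact (convex_univ.prod (convex_singleton _)).linear_image e.toLinearMap
  · exact ⟨e (0, 1), Set.mem_image_of_mem _ (Set.mk_mem_prod (mem_univ _) rfl)⟩
  · exact ⟨e (0, -1), Set.mem_image_of_mem _ (Set.mk_mem_prod (mem_univ _) rfl)⟩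
  · rw [← Set.image_inter e.injective]
    have h : ((univ : Set (EuclideanSpace ℝ (Fin d))) ×ˢ {(1:ℝ)}) ∩
        ((univ : Set (EuclideanSpace ℝ (Fin d))) ×ˢ {(-1:ℝ)}) = ∅ := by
      ext p
      simp only [Set.mem_inter_iff, Set.mem_prod, mem_univ, true_and,
        Set.mem_singleton_iff, Set.mem_empty_iff_false, iff_false, not_and]
      intro h1 h2
      rw [h1] at h2; norm_num at h2
    rw [h, Set.image_empty]
  · intro S hS
    have : Nonempty S := hS.to_subtype
    rw [← Set.image_iInter₂ e.bijective, Set.image_nonempty]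
    constructor
    · rintro ⟨p, hp⟩
      simp only [Set.mem_iInter] at hp
      exact ⟨p.1, Set.mem_iInter₂.2 fun i hi => (hp i hi).1⟩
    · rintro ⟨x, hx⟩
      simp only [Set.mem_iInter] at hx
      exact ⟨(x, 0), Set.mem_iInter₂.2 fun i hi =>
        Set.mk_mem_prod (hx i hi) (by norm_num)⟩
  · intro S hS
    have : Nonempty S := hS.to_subtype
    rw [← Set.image_iInter₂ e.bijective, ← Set.image_inter e.injective, Set.image_nonempty]
    constructor
    · rintro ⟨p, hp, _⟩
      simp only [Set.mem_iInter] at hp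
      exact ⟨p.1, Set.mem_iInter₂.2 fun i hi => (hp i hi).1⟩
    · rintro ⟨x, hx⟩
      simp only [Set.mem_iInter] at hx
      exact ⟨(x, 1), Set.mem_iInter₂.2 fun i hi =>
        Set.mk_mem_prod (hx i hi) (by norm_num), Set.mk_mem_prod (mem_univ _) rfl⟩
  · intro S hS
    have : Nonempty S := hS.to_subtype
    rw [← Set.image_iInter₂ e.bijective, ← Set.image_inter e.injective, Set.image_nonempty]
    constructor
    · rintro ⟨p, hp, _⟩
      simp only [Set.mem_iInter] at hp
      exact ⟨p.1, Set.mem_iInter₂.2 fun i hi => (hp i hi).1⟩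
    · rintro ⟨x, hx⟩
      simp only [Set.mem_iInter] at hx
      exact ⟨(x, -1), Set.mem_iInter₂.2 fun i hi =>
        Set.mk_mem_prod (hx i hi) (by norm_num), Set.mk_mem_prod (mem_univ _) rfl⟩
  · intro i
    have h1 : affineSpan ℝ (e '' (F i ×ˢ Icc (-1:ℝ) 1)) =
        (affineSpan ℝ (F i ×ˢ Icc (-1:ℝ) 1)).map e.toLinearMap.toAffineMap := by
      rw [AffineSubspace.map_span, LinearMap.coe_toAffineMap, LinearEquiv.coe_coe]
    rw [h1, AffineSubspace.map_direction, LinearMap.toAffineMap_linear,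
      direction_affineSpan, direction_affineSpan,
      vectorSpan_prod_eq' (hne i) ⟨0, by norm_num⟩]
    rw [show (e.toLinearMap : (EuclideanSpace ℝ (Fin d) × ℝ) →ₗ[ℝ] _) = (e : _ →ₗ[ℝ] _) from rfl,
      LinearEquiv.finrank_map_eq e, finrank_submodule_prod, vectorSpan_Icc_top]
    simp
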